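/- arXiv:2208.04193 — 6 statements merged into one kernel-verified Lean document; each statement's English description precedes it below -/
import Mathlib

section
/- Let 0 < a ≤ 1 and α_n = 1/(n+1)^a. Define δ_n^2 = ∑_{k=1}^n (π_k^n)^2 with π_k^n = α_k ∏_{i=k+1}^n (1-α_i). Then for all n ≥ 1, (1/2) α_n ≤ δ_n^2 ≤ α_n. -/
open Finset

theorem delta_sq_bounds (a : ℝ) (ha0 : 0 < a) (ha1 : a ≤ 1)
    (α : ℕ → ℝ) (hα : ∀ m, α m = 1 / ((m : ℝ) + 1) ^ a)
    (π : ℕ → ℕ → ℝ)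
    (hπ : ∀ k n, π k n = α k * ∏ i ∈ Finset.Icc (k + 1) n, (1 - α i))
    (δsq : ℕ → ℝ)
    (hδ : ∀ n, δsq n = ∑ k ∈ Finset.Icc 1 n, (π k n) ^ 2)
    (n : ℕ) (hn : 1 ≤ n) :
    (1 / 2) * α n ≤ δsq n ∧ δsq n ≤ α n := by
  -- basic facts about α
  have hpow_pos : ∀ m : ℕ, (0:ℝ) < ((m : ℝ) + 1) ^ a := by
    intro m
    exact Real.rpow_pos_of_pos (by positivity) a
  have hα_pos : ∀ m, 0 < α m := by
    intro m; rw [hα m]; positivity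
  have hα_le_one : ∀ m, α m ≤ 1 := by
    intro m
    rw [hα m]
    rw [div_le_one (hpow_pos m)]
    exact Real.one_le_rpow (by push_cast; linarith [Nat.cast_nonneg (α := ℝ) m]) ha0.le
  have hα_mono : ∀ m, α (m + 1) ≤ α m := by
    intro m
    rw [hα m, hα (m+1)]
    apply div_le_div_of_nonneg_left one_pos.le (hpow_pos m)
    apply Real.rpow_le_rpow (by positivity) _ ha0.le
    push_cast; linarith
  -- key inequality: α m * (1 - α (m+1)) ≤ α (m+1)
  have key : ∀ m : ℕ, α m * (1 - α (m + 1)) ≤ α (m + 1) := by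
    intro m
    have hsub : ((m : ℝ) + 1 + 1) ^ a ≤ ((m : ℝ) + 1) ^ a + 1 := by
      have h := NNReal.rpow_add_le_add_rpow ((m : NNReal) + 1) 1 ha0.le ha1
      rw [NNReal.one_rpow] at h
      have h2 := NNReal.coe_le_coe.2 h
      push_cast at h2
      exact h2
    have hA := hpow_pos m
    have hB := hpow_pos (m + 1)
    set A := ((m : ℝ) + 1) ^ a with hAdef
    set B := (((m + 1 : ℕ) : ℝ) + 1) ^ a with hBdef
    have hcast : ((m : ℝ) + 1 + 1) = ((m + 1 : ℕ) : ℝ) + 1 := by push_cast; ring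
    rw [hcast] at hsub
    rw [hα m, hα (m + 1), ← hAdef, ← hBdef]
    rw [div_mul_eq_mul_div, div_le_div_iff₀ hA hB]
    have hexp : (1 - 1 / B) * B = B - 1 := by field_simp
    nlinarith [hexp, hsub]
  -- recursion
  have hrec : ∀ m : ℕ, 1 ≤ m →
      δsq (m + 1) = (1 - α (m + 1)) ^ 2 * δsq m + α (m + 1) ^ 2 := by
    intro m hm
    rw [hδ (m + 1), hδ m]
    rw [Finset.sum_Icc_succ_top (by omega : 1 ≤ m + 1)]
    have hπtop : π (m + 1) (m + 1) = α (m + 1) := by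
      rw [hπ]
      rw [Finset.Icc_eq_empty (by omega)]
      simp
    rw [hπtop]
    have hterm : ∀ k ∈ Finset.Icc 1 m, (π k (m+1))^2 = (π k m)^2 * (1 - α (m+1))^2 := by
      intro k hk
      simp only [Finset.mem_Icc] at hk
      rw [hπ k (m+1), hπ k m, Finset.prod_Icc_succ_top (by omega : k + 1 ≤ m + 1)]
      ring
    rw [Finset.sum_congr rfl hterm, ← Finset.sum_mul]
    ring
  -- induction
  induction n, hn using Nat.le_induction with
  | base =>
    have h1 : δsq 1 = α 1 ^ 2 := by
      rw [hδ 1]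
      simp [hπ 1 1, Finset.Icc_eq_empty (by omega : ¬ (1 + 1 ≤ 1))]
    have hhalf : (1:ℝ)/2 ≤ α 1 := by
      rw [hα 1]
      rw [le_div_iff₀ (hpow_pos 1)]
      have : ((1:ℕ):ℝ) + 1 = 2 := by norm_num
      rw [this]
      have h2 : (2:ℝ) ^ a ≤ 2 ^ (1:ℝ) :=
        Real.rpow_le_rpow_of_exponent_le (by norm_num) ha1
      rw [Real.rpow_one] at h2
      linarith
    have := hα_le_one 1
    constructor <;> nlinarith [hα_pos 1]
  | succ m hm ih =>
    obtain ⟨ih1, ih2⟩ := ih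
    rw [hrec m hm]
    have h1 := hα_pos (m + 1)
    have h2 := hα_le_one (m + 1)
    have h3 := hα_mono m
    have h4 := key m
    have h5 := hα_pos m
    constructor
    · nlinarith [sq_nonneg (1 - α (m+1)), sq_nonneg (α (m+1))]
    · nlinarith [sq_nonneg (1 - α (m+1))]
end

section
/- Let 0 < a ≤ 1 and α_n = 1/(n+1)^a. Define δ_n^2 = ∑_{k=1}^n (π_k^n)^2 with π_k^n = α_k ∏_{i=k+1}^n (1-α_i). Then for all n ≥ 1, δ_n^2 ≤ α_{n+1} = 1/(n+2)^a. -/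
open Finset

set_option maxHeartbeats 1000000

lemma chord_bound {a z : ℝ} (ha0 : 0 ≤ a) (ha1 : a ≤ 1) (hz : 0 ≤ z) :
    z ^ a ≤ 1 - a + a * z := by
  have h := Real.geom_mean_le_arith_mean2_weighted (sub_nonneg.2 ha1) ha0 zero_le_one hz
    (by ring)
  simpa using h

lemma concave_quad {A B C xl xu x m : ℝ} (hA : A ≤ 0) (hxl : xl ≤ x) (hxu : x ≤ xu)
    (h1 : m ≤ A*xl^2 + B*xl + C) (h2 : m ≤ A*xu^2 + B*xu + C) :
    m ≤ A*x^2 + B*x + C := by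
  rcases le_or_gt 0 (A*(x+xl)+B) with h | h
  · nlinarith [mul_nonneg (sub_nonneg.2 hxl) h]
  · have h' : A*(x+xu)+B < 0 := by
      nlinarith [mul_nonneg (neg_nonneg.2 hA) (sub_nonneg.2 (hxl.trans hxu))]
    nlinarith [mul_nonneg (sub_nonneg.2 hxu) (neg_nonneg.2 h'.le)]

lemma concave_quad' {c xl xu x m : ℝ} (hc : c^2 ≤ 1) (hxl : xl ≤ x) (hxu : x ≤ xu)
    (h1 : m ≤ xl*(1-xl) + c^2*(1-xl)^2) (h2 : m ≤ xu*(1-xu) + c^2*(1-xu)^2) :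
    m ≤ x*(1-x) + c^2*(1-x)^2 := by
  have e : ∀ z : ℝ, z*(1-z) + c^2*(1-z)^2 = (c^2-1)*z^2 + (1-2*c^2)*z + c^2 := by
    intro z; ring
  rw [e]
  exact concave_quad (by linarith) hxl hxu (by rw [← e]; exact h1) (by rw [← e]; exact h2)

lemma key4 {a T x r : ℝ} (ha0 : 0 < a) (ha1 : a ≤ 1) (hT : 3 ≤ T)
    (hxl : 1 ≤ x * (1 + a*(T-1))) (hxu : x ≤ 1 - a + a/T)
    (hr0 : 0 ≤ r) (hrb : 1 - (T-2)*(1-a) ≤ r*(T-1)) :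
    a/T ≤ x*(1-x) + r^2*(1-x)^2 := by
  have hT0 : (0:ℝ) < T := by linarith
  have hb0 : 0 ≤ 1 - a := by linarith
  have hD : (0:ℝ) < 1 + a*(T-1) := by nlinarith
  have hxl' : (1 + a*(T-1))⁻¹ ≤ x := by
    rw [inv_eq_one_div, div_le_iff₀ hD]; linarith
  rcases le_or_gt (1 - (T-2)*(1-a)) 0 with hc | hc
  · -- "c = 0" case : a/T ≤ x(1-x), plus r^2(1-x)^2 ≥ 0
    have hE : 0 ≤ (T-2)*(1-a) - 1 := by linarith
    have hE3 : 0 ≤ T - 3 - ((T-2)*(1-a) - 1) := by nlinarith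
    have main : a/T ≤ x*(1-x) + (0:ℝ)^2*(1-x)^2 := by
      apply concave_quad' (by norm_num) hxl' hxu
      · rw [← sub_nonneg]
        have e : (1 + a*(T-1))⁻¹*(1-(1 + a*(T-1))⁻¹) + (0:ℝ)^2*(1-(1 + a*(T-1))⁻¹)^2 - a/T
            = (T*(a*(T-1)) - a*(1 + a*(T-1))^2) / (T*(1 + a*(T-1))^2) := by
          field_simp; ring
        rw [e]
        apply div_nonneg _ (by positivity)
        have hpoly : 0 ≤ T^3-3*T^2+2*T-1 := by nlinarith
        have hq : (T-2)^2*((1+a*(T-1))^2) ≤ (T-2)^2*(T*(T-1)) := by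
          nlinarith [hpoly, mul_nonneg hE (by nlinarith : (0:ℝ) ≤ T^2-2*T-1),
            mul_nonneg (mul_nonneg hE hE3) (sq_nonneg (T-1))]
        have hq' : (1+a*(T-1))^2 ≤ T*(T-1) := by
          have h2 : (0:ℝ) < (T-2)^2 := by nlinarith
          exact le_of_mul_le_mul_left hq h2
        nlinarith [mul_le_mul_of_nonneg_left hq' ha0.le]
      · rw [← sub_nonneg]
        have e : (1 - a + a/T)*(1-(1 - a + a/T)) + (0:ℝ)^2*(1-(1 - a + a/T))^2 - a/T
            = (a*((1-a)*(T-1)^2 - 1)) / (T*T) := by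
          field_simp; ring
        rw [e]
        apply div_nonneg _ (by positivity)
        nlinarith [mul_nonneg (mul_nonneg hb0 ha0.le) (by linarith : (0:ℝ) ≤ T-2), hE]
    nlinarith [mul_nonneg (sq_nonneg r) (sq_nonneg (1-x))]
  · set c : ℝ := (1 - (T-2)*(1-a))/(T-1) with hcdef
    have hT1 : (0:ℝ) < T - 1 := by linarith
    have hc0 : 0 ≤ c := le_of_lt (div_pos hc hT1)
    have hcr : c ≤ r := by rw [hcdef, div_le_iff₀ hT1]; linarith
    have hc1 : c ≤ 1 := by
      rw [hcdef, div_le_iff₀ hT1]; nlinarith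
    have main : a/T ≤ x*(1-x) + c^2*(1-x)^2 := by
      apply concave_quad' (by nlinarith) hxl' hxu
      · rw [← sub_nonneg]
        have e : (1 + a*(T-1))⁻¹*(1-(1 + a*(T-1))⁻¹) + c^2*(1-(1 + a*(T-1))⁻¹)^2 - a/T
            = (a*((1-a)*T + (1-a)^2*(T^3-3*T^2+2*T-1) - (1-a)^3*T*(T-2)^2))
              / (T*(1 + a*(T-1))^2) := by
          rw [hcdef]; field_simp; ring
        rw [e]
        apply div_nonneg _ (by positivity)
        nlinarith [mul_nonneg (mul_nonneg (mul_nonneg hb0 ha0.le) hT0.le)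
            (by linarith : (0:ℝ) ≤ 1-(1-a)),
          mul_nonneg (mul_nonneg (mul_nonneg (mul_nonneg hb0 hb0) ha0.le)
            (mul_nonneg hT0.le (sq_nonneg (T-2)))) (by linarith : (0:ℝ) ≤ 1-(1-a)),
          mul_nonneg (mul_nonneg (mul_nonneg hb0 hb0) ha0.le)
            (by nlinarith : (0:ℝ) ≤ T^2-T-1)]
      · rw [← sub_nonneg]
        have e : (1 - a + a/T)*(1-(1 - a + a/T)) + c^2*(1-(1 - a + a/T))^2 - a/T
            = (a*((1-a)*(T-2)^2 + (1-a)^2*T*(T-2) - (1-a)^3*(T-2)^2)) / (T*T) := by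
          rw [hcdef]; field_simp; ring
        rw [e]
        apply div_nonneg _ (by positivity)
        nlinarith [mul_nonneg (mul_nonneg (mul_nonneg hb0 ha0.le) (sq_nonneg (T-2)))
            (by nlinarith : (0:ℝ) ≤ 1-(1-a)^2),
          mul_nonneg (mul_nonneg (mul_nonneg (mul_nonneg hb0 hb0) ha0.le) hT0.le)
            (by linarith : (0:ℝ) ≤ T-2)]
    have hrr : c^2 ≤ r^2 := by nlinarith
    nlinarith [mul_nonneg (sub_nonneg.2 hrr) (sq_nonneg (1-x))]

lemma step_ineq {a : ℝ} (ha0 : 0 < a) (ha1 : a ≤ 1) (m : ℕ) (hm : 1 ≤ m)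
    {x y d : ℝ} (hx : x = 1/((m:ℝ)+2)^a) (hy : y = 1/((m:ℝ)+3)^a)
    (hd : d ≤ x * (1 - (a^m/((m:ℝ)+1))^2)) :
    (1-x)^2 * d + x^2 ≤ y * (1 - (a^(m+1)/((m:ℝ)+2))^2) := by
  set T : ℝ := (m:ℝ)+2 with hTdef
  have hT3 : 3 ≤ T := by
    have : (1:ℝ) ≤ (m:ℝ) := by exact_mod_cast hm
    simp only [hTdef]; linarith
  have hTpos : (0:ℝ) < T := by linarith
  have hTa : (0:ℝ) < T^a := Real.rpow_pos_of_pos hTpos a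
  have hT1a : (0:ℝ) < (T+1)^a := Real.rpow_pos_of_pos (by linarith) a
  have hx0 : 0 < x := by rw [hx]; positivity
  have hy' : y = 1/(T+1)^a := by rw [hy]; norm_num [hTdef]; ring_nf
  have hy0 : 0 < y := by rw [hy']; positivity
  set R : ℝ := a^m/((m:ℝ)+1) with hRdef
  set R' : ℝ := a^(m+1)/T with hR'def
  have hR0 : 0 ≤ R := by positivity
  have hR'0 : 0 ≤ R' := by positivity
  have hchT := chord_bound ha0.le ha1 hTpos.le
  have hxl : 1 ≤ x * (1 + a*(T-1)) := by
    have h1 : T^a ≤ 1 + a*(T-1) := by linarith [hchT]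
    calc (1:ℝ) = (1/T^a) * T^a := by field_simp
    _ ≤ (1/T^a) * (1 + a*(T-1)) := by
        apply mul_le_mul_of_nonneg_left h1 (by positivity)
    _ = x * (1 + a*(T-1)) := by rw [hx]
  have hxu : x ≤ 1 - a + a/T := by
    have hinv : ((1:ℝ)/T)^a = 1/T^a := by
      rw [Real.div_rpow (by norm_num) hTpos.le, Real.one_rpow]
    have hc := chord_bound ha0.le ha1 (z := 1/T) (by positivity)
    rw [hinv] at hc
    rw [hx]
    calc 1/T^a ≤ 1 - a + a * (1/T) := hc
    _ = 1 - a + a/T := by ring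
  have hm1 : ((m:ℝ)+1) ≠ 0 := by positivity
  have hRT : R * (T-1) = a^m := by
    rw [hRdef]
    have : T - 1 = (m:ℝ)+1 := by rw [hTdef]; ring
    rw [this, div_mul_cancel₀ _ hm1]
  have hbern : 1 + (m:ℝ)*(a-1) ≤ a^m := by
    have h := one_add_mul_le_pow (a := a-1) (by linarith) m
    rw [show (1:ℝ)+(a-1) = a by ring] at h
    exact h
  have hrb : 1 - (T-2)*(1-a) ≤ R*(T-1) := by
    rw [hRT, hTdef]
    nlinarith [hbern]
  have hk := key4 ha0 ha1 hT3 hxl hxu hR0 hrb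
  have s1 : (1-x)^2 * d + x^2 ≤ (1-x)^2 * (x * (1 - R^2)) + x^2 := by
    have := mul_le_mul_of_nonneg_left hd (sq_nonneg (1-x))
    linarith
  have s2 : (1-x)^2 * (x * (1 - R^2)) + x^2 ≤ x * (1 - a/T) := by
    nlinarith [mul_nonneg hx0.le (sub_nonneg.2 hk)]
  have s3 : x * (1 - a/T) ≤ y * (1 - R'^2) := by
    have hw1 : ((1:ℝ)+1/T)^a ≤ 1 + a/T := by
      have hc := chord_bound ha0.le ha1 (z := 1+1/T) (by positivity)
      calc ((1:ℝ)+1/T)^a ≤ 1 - a + a*(1+1/T) := hc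
      _ = 1 + a/T := by ring
    have hxy : y * ((1:ℝ)+1/T)^a = x := by
      rw [hy', hx, show (1:ℝ)+1/T = (T+1)/T by field_simp]
      rw [Real.div_rpow (by linarith) hTpos.le]
      field_simp
    have hq : x ≤ y * (1 + a/T) := by
      rw [← hxy]
      exact mul_le_mul_of_nonneg_left hw1 hy0.le
    have hR'b : R' ≤ a/T := by
      rw [hR'def]
      gcongr
      calc a^(m+1) ≤ a^1 := pow_le_pow_of_le_one ha0.le ha1 (by omega)
      _ = a := pow_one a
    have haT : a/T ≤ 1 := by
      rw [div_le_one hTpos]; linarith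
    nlinarith [mul_le_mul_of_nonneg_right hq (by linarith : (0:ℝ) ≤ 1 - a/T),
      mul_nonneg hy0.le (sub_nonneg.2 (by nlinarith : R'^2 ≤ (a/T)^2))]
  calc (1-x)^2 * d + x^2 ≤ x * (1 - a/T) := le_trans s1 s2
  _ ≤ y * (1 - R'^2) := s3
  _ = y * (1 - (a^(m+1)/((m:ℝ)+2))^2) := by rw [hR'def]

theorem delta_sq_le_alpha_succ (a : ℝ) (ha0 : 0 < a) (ha1 : a ≤ 1)
    (α : ℕ → ℝ) (hα : ∀ m, α m = 1 / ((m : ℝ) + 1) ^ a)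
    (π : ℕ → ℕ → ℝ)
    (hπ : ∀ k n, π k n = α k * ∏ i ∈ Finset.Icc (k + 1) n, (1 - α i))
    (δsq : ℕ → ℝ)
    (hδ : ∀ n, δsq n = ∑ k ∈ Finset.Icc 1 n, (π k n) ^ 2)
    (n : ℕ) (hn : 1 ≤ n) :
    δsq n ≤ α (n + 1) := by
  have hrec : ∀ m : ℕ, δsq (m+1) = (1 - α (m+1))^2 * δsq m + (α (m+1))^2 := by
    intro m
    rw [hδ, hδ, Finset.sum_Icc_succ_top (by omega : 1 ≤ m+1)]
    have hlast : π (m+1) (m+1) = α (m+1) := by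
      rw [hπ, Finset.Icc_eq_empty (by omega), Finset.prod_empty, mul_one]
    rw [hlast]
    congr 1
    rw [Finset.mul_sum]
    apply Finset.sum_congr rfl
    intro k hk
    have hk' : k ≤ m := (Finset.mem_Icc.1 hk).2
    rw [hπ k (m+1), hπ k m, Finset.prod_Icc_succ_top (by omega : k+1 ≤ m+1)]
    ring
  have hαcast : ∀ m : ℕ, α (m+1) = 1/((m:ℝ)+2)^a := by
    intro m
    rw [hα]
    norm_num
    ring_nf
  have inv : ∀ m : ℕ, 1 ≤ m → δsq m ≤ α (m+1) * (1 - (a^m/((m:ℝ)+1))^2) := by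
    intro m hm
    induction m, hm using Nat.le_induction with
    | base =>
      have hbase : δsq 1 = (α 1)^2 := by
        rw [hδ 1, Finset.Icc_self, Finset.sum_singleton, hπ,
          Finset.Icc_eq_empty (by omega), Finset.prod_empty, mul_one]
      rw [hbase]
      have h1 : α 1 = 1 / (2:ℝ)^a := by rw [hα]; norm_num
      have h2 : α 2 = 1 / (3:ℝ)^a := by rw [hα]; norm_num
      have p3 : (0:ℝ) < (3:ℝ)^a := Real.rpow_pos_of_pos (by norm_num) a
      have p4 : (0:ℝ) < (4:ℝ)^a := Real.rpow_pos_of_pos (by norm_num) a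
      have h34 : (3:ℝ)^a ≤ (1 - a/4) * (4:ℝ)^a := by
        have hc := chord_bound ha0.le ha1 (z := (3:ℝ)/4) (by norm_num)
        have hd : ((3:ℝ)/4)^a = (3:ℝ)^a / (4:ℝ)^a := Real.div_rpow (by norm_num) (by norm_num) a
        rw [hd, div_le_iff₀ p4] at hc
        calc (3:ℝ)^a ≤ (1 - a + a * (3/4)) * 4^a := hc
        _ = (1 - a/4) * 4^a := by ring
      have h24 : ((2:ℝ)^a)^2 = (4:ℝ)^a := by
        rw [sq, ← Real.mul_rpow (by norm_num) (by norm_num)]; norm_num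
      rw [h1, h2]
      rw [div_pow, h24, one_pow]
      have e : 1/(3:ℝ)^a * (1 - (a^1/(((1:ℕ):ℝ)+1))^2) = (1 - a^2/4)/3^a := by
        push_cast; ring
      rw [e, div_le_div_iff₀ p4 p3]
      nlinarith [h34, mul_nonneg (by nlinarith : (0:ℝ) ≤ a - a^2) p4.le]
    | succ m hm ih =>
      rw [hrec m]
      have hx := hαcast m
      have hy : α (m+1+1) = 1/((m:ℝ)+3)^a := by
        rw [hα]
        push_cast
        norm_num
        ring_nf
      have hcast : ((m+1:ℕ):ℝ) = (m:ℝ)+1 := by push_cast; ring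
      rw [hcast]
      have goal := step_ineq ha0 ha1 m hm hx hy ih
      calc (1 - α (m+1))^2 * δsq m + (α (m+1))^2
        ≤ α (m+1+1) * (1 - (a^(m+1)/((m:ℝ)+2))^2) := goal
      _ = α (m+1+1) * (1 - (a^(m+1)/((m:ℝ)+1+1))^2) := by ring_nf
  have h := inv n hn
  have hp : 0 < α (n+1) := by
    rw [hα]
    positivity
  nlinarith [h, hp, mul_nonneg hp.le (sq_nonneg (a^n/((n:ℝ)+1)))]
end

section
/- Let 1/2 ≤ a ≤ 1 and α_n = 1/(n+1)^a. Define τ_n(a) = ∑_{k=1}^n α_k(1-α_k). Then for 1/2 ≤ a < 1 and all n ≥ 1, τ_n(a) ≥ τ_1(a) · n^{1-a}, and for a = 1 and all n ≥ 1, τ_n(1) ≥ (1/(4 ln 2)) · ln(n+1). -/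
open Finset

lemma icc_split (n : ℕ) : Finset.Icc 1 (n+1) = insert (n+1) (Finset.Icc 1 n) := by
  ext x; simp [Finset.mem_Icc]; omega

lemma bern_step {a : ℝ} (ha : 1/2 ≤ a) (ha1 : a < 1) {N : ℝ} (hN : 1 ≤ N) :
    (N+1) ^ (1-a) - N ^ (1-a) ≤ (1-a) * N ^ (-a) := by
  have h0 : (0:ℝ) < N := by linarith
  have hb : ((1 + 1/N : ℝ)) ^ (1-a) ≤ 1 + (1-a) * (1/N) := by
    apply rpow_one_add_le_one_add_mul_self (by have h := le_of_lt (one_div_pos.mpr h0); linarith) (by linarith) (by linarith)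
  have heq : (N+1) ^ (1-a) = N ^ (1-a) * (1 + 1/N) ^ (1-a) := by
    rw [← Real.mul_rpow h0.le (by positivity)]
    congr 1; field_simp
  have h2 : N ^ (1-a) * (1/N) = N ^ (-a) := by
    rw [one_div, ← Real.rpow_neg_one N, ← Real.rpow_add h0]
    ring_nf
  calc (N+1) ^ (1-a) - N ^ (1-a)
      = N ^ (1-a) * ((1 + 1/N) ^ (1-a) - 1) := by rw [heq]; ring
    _ ≤ N ^ (1-a) * ((1-a) * (1/N)) := by
        apply mul_le_mul_of_nonneg_left (by linarith) (Real.rpow_nonneg h0.le _)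
    _ = (1-a) * N ^ (-a) := by rw [← h2]; ring

lemma main_step {a : ℝ} (ha : 1/2 ≤ a) (ha1 : a < 1) {N : ℝ} (hN : 1 ≤ N) :
    (1/(2:ℝ)^a) * (1 - 1/(2:ℝ)^a) * ((N+1)^(1-a) - N^(1-a)) ≤ (1/(N+2)^a) * (1 - 1/(N+2)^a) := by
  have ha0 : 0 < a := by linarith
  have h0 : (0:ℝ) < N := by linarith
  have h2p : (0:ℝ) < (2:ℝ)^a := Real.rpow_pos_of_pos (by norm_num) a
  have hNp : (0:ℝ) < N^a := Real.rpow_pos_of_pos h0 a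
  have hP2 : (0:ℝ) < (N+2)^a := Real.rpow_pos_of_pos (by linarith) a
  have h2a : (1:ℝ) < (2:ℝ)^a :=
    (Real.one_lt_rpow_iff_of_pos (by norm_num)).mpr (Or.inl ⟨by norm_num, ha0⟩)
  have h2N : (2:ℝ)^a ≤ (N+2)^a := Real.rpow_le_rpow (by norm_num) (by linarith) ha0.le
  have hfrac : 1/((N+2):ℝ)^a ≤ 1/(2:ℝ)^a := one_div_le_one_div_of_le h2p h2N
  have hkey : (1-a) / ((2:ℝ)^a * N^a) ≤ 1/(N+2)^a := by
    rw [div_le_div_iff₀ (by positivity) hP2, one_mul]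
    have hq : (2/3:ℝ) ≤ 2*N/(N+2) := by
      rw [le_div_iff₀ (by linarith)]; nlinarith
    have h23 : (2/3:ℝ) ≤ (2/3:ℝ)^a := by
      nth_rewrite 1 [← Real.rpow_one (2/3:ℝ)]
      exact Real.rpow_le_rpow_of_exponent_ge (by norm_num) (by norm_num) ha1.le
    have h4 : ((2/3:ℝ))^a ≤ (2*N/(N+2))^a := Real.rpow_le_rpow (by norm_num) hq ha0.le
    have h5 : (2*N/(N+2):ℝ)^a = (2:ℝ)^a * N^a / (N+2)^a := by
      rw [Real.div_rpow (by positivity) (by linarith), Real.mul_rpow (by norm_num) h0.le]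
    have h6 : (1-a) ≤ (2:ℝ)^a * N^a / (N+2)^a := by
      calc (1-a) ≤ 2/3 := by linarith
        _ ≤ (2*N/(N+2):ℝ)^a := le_trans h23 h4
        _ = _ := h5
    calc (1-a) * (N+2)^a ≤ ((2:ℝ)^a * N^a / (N+2)^a) * (N+2)^a :=
          mul_le_mul_of_nonneg_right h6 hP2.le
      _ = (2:ℝ)^a * N^a := by field_simp
  have hbn : (N+1)^(1-a) - N^(1-a) ≤ (1-a) / N^a := by
    have hb := bern_step ha ha1 hN
    have he : (1-a) * N^(-a) = (1-a) / N^a := by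
      rw [Real.rpow_neg h0.le]; ring
    linarith [he ▸ hb]
  have hΔ : 0 ≤ (N+1)^(1-a) - N^(1-a) := by
    have := Real.rpow_le_rpow h0.le (by linarith : N ≤ N+1) (by linarith : (0:ℝ) ≤ 1-a)
    linarith
  have hc1 : (0:ℝ) ≤ 1 - 1/(2:ℝ)^a := by
    have : 1/(2:ℝ)^a < 1 := by rw [div_lt_one h2p]; exact h2a
    linarith
  calc (1/(2:ℝ)^a) * (1 - 1/(2:ℝ)^a) * ((N+1)^(1-a) - N^(1-a))
      ≤ (1/(2:ℝ)^a) * (1 - 1/(2:ℝ)^a) * ((1-a)/N^a) := by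
        apply mul_le_mul_of_nonneg_left hbn (by positivity)
    _ = (1 - 1/(2:ℝ)^a) * ((1/(2:ℝ)^a) * ((1-a)/N^a)) := by ring
    _ = (1 - 1/(2:ℝ)^a) * ((1-a) / ((2:ℝ)^a * N^a)) := by rw [div_mul_div_comm, one_mul]
    _ ≤ (1 - 1/(2:ℝ)^a) * (1/(N+2)^a) := mul_le_mul_of_nonneg_left hkey hc1
    _ ≤ (1 - 1/(N+2)^a) * (1/(N+2)^a) := by
        apply mul_le_mul_of_nonneg_right (by linarith) (by positivity)
    _ = (1/(N+2)^a) * (1 - 1/(N+2)^a) := by ring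

lemma log_step {N : ℝ} (hN : 1 ≤ N) :
    (1/(4*Real.log 2)) * (Real.log (N+2) - Real.log (N+1)) ≤ (1/(N+2)) * (1 - 1/(N+2)) := by
  have hL := Real.log_two_gt_d9
  have hL0 : (0:ℝ) < Real.log 2 := Real.log_pos (by norm_num)
  have h1 : (0:ℝ) < N+1 := by linarith
  have h2 : (0:ℝ) < N+2 := by linarith
  have hlog : Real.log (N+2) - Real.log (N+1) ≤ 1/(N+1) := by
    rw [← Real.log_div (by linarith) (by linarith)]
    have h := Real.log_le_sub_one_of_pos (x := (N+2)/(N+1)) (by positivity)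
    have he : (N+2)/(N+1) - 1 = 1/(N+1) := by field_simp; norm_num
    linarith [he ▸ h]
  have hr : (1/(N+2)) * (1 - 1/(N+2)) = (N+1)/(N+2)^2 := by field_simp; ring
  rw [hr]
  have hnum : (1/(4*Real.log 2)) * (1/(N+1)) ≤ (N+1)/(N+2)^2 := by
    rw [div_mul_div_comm, one_mul, div_le_div_iff₀ (by positivity) (by positivity)]
    nlinarith [mul_nonneg (mul_nonneg (by linarith : (0:ℝ) ≤ Real.log 2 - 0.69) (by linarith : (0:ℝ) ≤ N+1)) (by linarith : (0:ℝ) ≤ N+1),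
      mul_nonneg (by linarith : (0:ℝ) ≤ N-1) (by linarith : (0:ℝ) ≤ N+1)]
  calc (1/(4*Real.log 2)) * (Real.log (N+2) - Real.log (N+1))
      ≤ (1/(4*Real.log 2)) * (1/(N+1)) := mul_le_mul_of_nonneg_left hlog (by positivity)
    _ ≤ _ := hnum

theorem tau_lower_bounds (a : ℝ) (ha : 1 / 2 ≤ a) (ha1 : a ≤ 1)
    (τ : ℕ → ℝ → ℝ)
    (hτ : ∀ n b, τ n b = ∑ k ∈ Finset.Icc 1 n,
      (1 / ((k : ℝ) + 1) ^ b) * (1 - 1 / ((k : ℝ) + 1) ^ b)) :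
    (a < 1 → ∀ n : ℕ, 1 ≤ n → τ 1 a * (n : ℝ) ^ (1 - a) ≤ τ n a) ∧
    (a = 1 → ∀ n : ℕ, 1 ≤ n → (1 / (4 * Real.log 2)) * Real.log ((n : ℝ) + 1) ≤ τ n 1) := by
  have ha' : 1/2 ≤ a := ha
  constructor
  · intro hlt n hn
    have hτ1 : τ 1 a = (1/(2:ℝ)^a) * (1 - 1/(2:ℝ)^a) := by
      rw [hτ]; rw [Finset.Icc_self, Finset.sum_singleton]; norm_num
    induction n, hn using Nat.le_induction with
    | base => simp [Real.one_rpow]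
    | succ n hn ih =>
      have hsum : τ (n+1) a = τ n a + (1/((n:ℝ)+2)^a) * (1 - 1/((n:ℝ)+2)^a) := by
        rw [hτ n a, hτ (n+1) a, icc_split, Finset.sum_insert (by simp), add_comm]
        have hc : ((n+1:ℕ):ℝ)+1 = (n:ℝ)+2 := by push_cast; ring
        rw [hc]
      have hN1 : (1:ℝ) ≤ (n:ℝ) := by exact_mod_cast hn
      have hms := main_step ha' hlt hN1
      have hcast : ((n+1:ℕ):ℝ) = (n:ℝ)+1 := by push_cast; ring
      rw [hsum, hcast, hτ1]
      rw [hτ1] at ih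
      have hexp : (1/(2:ℝ)^a) * (1 - 1/(2:ℝ)^a) * ((n:ℝ)+1) ^ (1-a) =
          (1/(2:ℝ)^a) * (1 - 1/(2:ℝ)^a) * (((n:ℝ)+1) ^ (1-a) - (n:ℝ) ^ (1-a))
          + (1/(2:ℝ)^a) * (1 - 1/(2:ℝ)^a) * (n:ℝ) ^ (1-a) := by ring
      linarith [hexp]
  · intro _ n hn
    have hL0 : (0:ℝ) < Real.log 2 := Real.log_pos (by norm_num)
    induction n, hn using Nat.le_induction with
    | base =>
      have hτ1 : τ 1 1 = 1/4 := by
        rw [hτ]; rw [Finset.Icc_self, Finset.sum_singleton]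
        norm_num [Real.rpow_one]
      rw [hτ1]
      have : ((1:ℕ):ℝ) + 1 = 2 := by norm_num
      rw [this]
      rw [div_mul_eq_mul_div, one_mul, div_le_iff₀ (by positivity)]
      ring_nf; linarith
    | succ n hn ih =>
      have hsum : τ (n+1) 1 = τ n 1 + (1/((n:ℝ)+2)) * (1 - 1/((n:ℝ)+2)) := by
        rw [hτ n 1, hτ (n+1) 1, icc_split, Finset.sum_insert (by simp), add_comm]
        have hc : ((n+1:ℕ):ℝ)+1 = (n:ℝ)+2 := by push_cast; ring
        rw [hc, Real.rpow_one]
      have hN1 : (1:ℝ) ≤ (n:ℝ) := by exact_mod_cast hn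
      have hls := log_step hN1
      have hcast : ((n+1:ℕ):ℝ) + 1 = (n:ℝ)+2 := by push_cast; ring
      rw [hsum, hcast]
      have hexp : (1/(4*Real.log 2)) * Real.log ((n:ℝ)+2) =
          (1/(4*Real.log 2)) * (Real.log ((n:ℝ)+2) - Real.log ((n:ℝ)+1))
          + (1/(4*Real.log 2)) * Real.log ((n:ℝ)+1) := by ring
      linarith [hexp]
end

section
/- For all a ∈ [1/2, 1) and z ∈ [0,1), the inequality a(1 + 1/(1 - z^a)) ≤ 1 + 1/(1 - z) holds. -/
theorem a_mul_le (a z : ℝ) (ha : 1 / 2 ≤ a) (ha1 : a < 1)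
    (hz0 : 0 ≤ z) (hz1 : z < 1) :
    a * (1 + 1 / (1 - z ^ a)) ≤ 1 + 1 / (1 - z) := by
  have hapos : 0 < a := by linarith
  have hgm : z ^ a * 1 ^ (1 - a) ≤ a * z + (1 - a) * 1 :=
    Real.geom_mean_le_arith_mean2_weighted (le_of_lt hapos) (by linarith) hz0 zero_le_one
      (by ring)
  rw [Real.one_rpow, mul_one, mul_one] at hgm
  have h1 : a * (1 - z) ≤ 1 - z ^ a := by linarith
  have hzpos : 0 < 1 - z := by linarith
  have h2 : 0 < a * (1 - z) := mul_pos hapos hzpos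
  have h3 : 0 < 1 - z ^ a := lt_of_lt_of_le h2 h1
  have h4 : a / (1 - z ^ a) ≤ a / (a * (1 - z)) :=
    div_le_div_of_nonneg_left (le_of_lt hapos) h2 h1
  have h5 : a / (a * (1 - z)) = 1 / (1 - z) := by
    field_simp
  rw [h5] at h4
  have h6 : a * (1 + 1 / (1 - z ^ a)) = a + a / (1 - z ^ a) := by ring
  rw [h6]
  linarith
end

section
/- For all a ∈ [1/2, 1), the function x ↦ (x+1)^a · (x^{1-a} - (x-1)^{1-a}) is decreasing on [1,∞). -/
open Real Set intervalIntegral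

theorem antitone_pow_diff (a : ℝ) (ha : 1 / 2 ≤ a) (ha1 : a < 1) :
    AntitoneOn (fun x : ℝ => (x + 1) ^ a * (x ^ (1 - a) - (x - 1) ^ (1 - a)))
      (Set.Ici (1 : ℝ)) := by
  have ha0 : 0 < a := lt_of_lt_of_le (by norm_num) ha
  have hb : 0 < 1 - a := by linarith
  -- derivative at each x > 1
  have key : ∀ x : ℝ, 1 < x →
      HasDerivAt (fun x : ℝ => (x + 1) ^ a * (x ^ (1 - a) - (x - 1) ^ (1 - a)))
        ((1 * a * (x + 1) ^ (a - 1)) * (x ^ (1 - a) - (x - 1) ^ (1 - a))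
          + (x + 1) ^ a * ((1 - a) * x ^ (1 - a - 1) - 1 * (1 - a) * (x - 1) ^ (1 - a - 1))) x := by
    intro x hx
    have hx1 : (0:ℝ) < x := by linarith
    have hx0 : (0:ℝ) < x - 1 := by linarith
    have hx2 : (0:ℝ) < x + 1 := by linarith
    have hg : HasDerivAt (fun x : ℝ => (x + 1) ^ a) (1 * a * (x + 1) ^ (a - 1)) x :=
      ((hasDerivAt_id x).add_const 1).rpow_const (Or.inl (by positivity))
    have h1 : HasDerivAt (fun x : ℝ => x ^ (1 - a)) ((1 - a) * x ^ (1 - a - 1)) x :=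
      Real.hasDerivAt_rpow_const (Or.inl (ne_of_gt hx1))
    have h2 : HasDerivAt (fun x : ℝ => (x - 1) ^ (1 - a)) (1 * (1 - a) * (x - 1) ^ (1 - a - 1)) x :=
      ((hasDerivAt_id x).sub_const 1).rpow_const (Or.inl (ne_of_gt hx0))
    exact hg.mul (h1.sub h2)
  -- the derivative is nonpositive on (1, ∞)
  have hderiv_nonpos : ∀ x : ℝ, 1 < x →
      (1 * a * (x + 1) ^ (a - 1)) * (x ^ (1 - a) - (x - 1) ^ (1 - a))
        + (x + 1) ^ a * ((1 - a) * x ^ (1 - a - 1) - 1 * (1 - a) * (x - 1) ^ (1 - a - 1)) ≤ 0 := by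
    intro x hx
    have hx1 : (0:ℝ) < x := by linarith
    have hx0 : (0:ℝ) < x - 1 := by linarith
    have hx2 : (0:ℝ) < x + 1 := by linarith
    have hle : x - 1 ≤ x := by linarith
    have hnm : (0:ℝ) ∉ Set.uIcc (x - 1) x := Set.notMem_uIcc_of_lt hx0 hx1
    have hI1 : ∫ t in (x-1)..x, t ^ (-a) = (x ^ (-a + 1) - (x-1) ^ (-a + 1)) / (-a + 1) :=
      integral_rpow (Or.inl (by linarith))
    have hI2 : ∫ t in (x-1)..x, t ^ (-1-a) = (x ^ (-1-a+1) - (x-1) ^ (-1-a+1)) / (-1-a+1) :=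
      integral_rpow (Or.inr ⟨by intro h; apply ha0.ne'; linarith, hnm⟩)
    have hint1 : IntervalIntegrable (fun t : ℝ => t ^ (-a)) MeasureTheory.volume (x-1) x :=
      intervalIntegral.intervalIntegrable_rpow (Or.inr hnm)
    have hint2 : IntervalIntegrable (fun t : ℝ => (x+1) * t ^ (-1-a)) MeasureTheory.volume (x-1) x :=
      (intervalIntegral.intervalIntegrable_rpow (Or.inr hnm)).const_mul _
    have hmono : ∫ t in (x-1)..x, t ^ (-a) ≤ ∫ t in (x-1)..x, (x+1) * t ^ (-1-a) := by
      apply intervalIntegral.integral_mono_on hle hint1 hint2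
      intro t ht
      have ht0 : 0 < t := lt_of_lt_of_le hx0 ht.1
      have : t ^ (-a) = t ^ (-1-a) * t := by
        rw [← Real.rpow_add_one (ne_of_gt ht0)]; ring_nf
      rw [this]
      have htp : (0:ℝ) < t ^ (-1-a) := Real.rpow_pos_of_pos ht0 _
      nlinarith [ht.2]
    rw [hI1, intervalIntegral.integral_const_mul, hI2] at hmono
    -- rewrite exponents
    have e1 : -a + 1 = 1 - a := by ring
    have e2 : -1 - a + 1 = -a := by ring
    rw [e1, e2] at hmono
    -- so: (x^(1-a) - (x-1)^(1-a))/(1-a) ≤ (x+1) * ((x^(-a) - (x-1)^(-a))/(-a))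
    have hA : a * (x ^ (1-a) - (x-1) ^ (1-a)) ≤ (1-a) * ((x+1) * ((x-1) ^ (-a) - x ^ (-a))) := by
      rw [div_le_iff₀ hb] at hmono
      have h2 : (x ^ (-a) - (x - 1) ^ (-a)) / -a = ((x - 1) ^ (-a) - x ^ (-a)) / a := by
        field_simp [ha0.ne']
        ring
      rw [h2] at hmono
      have h3 := mul_le_mul_of_nonneg_left hmono ha0.le
      have h4 : a * ((x + 1) * (((x - 1) ^ (-a) - x ^ (-a)) / a) * (1 - a))
          = (1 - a) * ((x + 1) * ((x - 1) ^ (-a) - x ^ (-a))) := by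
        field_simp [ha0.ne']
      rw [h4] at h3
      linarith
    -- now express derivative
    have hP : (0:ℝ) < (x + 1) ^ (a - 1) := Real.rpow_pos_of_pos hx2 _
    have hsplit : (x + 1) ^ a = (x + 1) ^ (a - 1) * (x + 1) := by
      rw [← Real.rpow_add_one (ne_of_gt hx2)]; ring_nf
    have e3 : 1 - a - 1 = -a := by ring
    rw [e3, hsplit]
    nlinarith [hA, hP, mul_le_mul_of_nonneg_left hA (le_of_lt hP)]
  -- continuity on Ici 1
  have hcont : ContinuousOn (fun x : ℝ => (x + 1) ^ a * (x ^ (1 - a) - (x - 1) ^ (1 - a)))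
      (Set.Ici (1 : ℝ)) := by
    apply ContinuousOn.mul
    · apply ContinuousOn.rpow_const (by fun_prop)
      intro x hx
      left
      have : (1:ℝ) ≤ x := hx
      positivity
    · apply ContinuousOn.sub
      · apply ContinuousOn.rpow_const (by fun_prop)
        intro x hx
        left
        have : (1:ℝ) ≤ x := hx
        positivity
      · apply ContinuousOn.rpow_const (by fun_prop)
        intro x hx
        right
        linarith
  have hint : interior (Set.Ici (1:ℝ)) = Set.Ioi 1 := interior_Ici
  apply antitoneOn_of_deriv_nonpos (convex_Ici 1) hcont
  · rw [hint]
    intro x hx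
    exact ((key x hx).differentiableAt).differentiableWithinAt
  · rw [hint]
    intro x hx
    rw [(key x hx).deriv]
    exact hderiv_nonpos x hx
end

section
/- Let 1/2 ≤ a ≤ 1, α_k = 1/(k+1)^a, and γ_a = sup_{k≥2} [α_k(1-α_k)] / [α_{k+1}(1-α_{k+1})]. Then γ_a is finite, γ_a ≥ 1, and for a = 1 the ratio α_k(1-α_k)/(α_{k+1}(1-α_{k+1})) is decreasing in k ≥ 2 with supremum γ_1 = 32/27, and γ_a ≤ 32/27 for all a ∈ [1/2, 1]. -/
lemma poly_key (K t y : ℝ) (hK : 2 ≤ K) (ht1 : 1 ≤ t) (ht2 : t*(K+1) ≤ K+2)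
    (hy : 1 ≤ y*(K+2)) (hy1 : y ≤ 1) :
    t*(1-t*y)*(K+1)^3 ≤ K*(K+2)^2*(1-y) := by
  have h1 : 0 ≤ (t-1)*((K+2)*y-1) := by nlinarith
  have h2 : 0 ≤ ((K+2)-t*(K+1)) * ((K+2)*(K+1)-(K+2)-t*(K+1)) := by
    apply mul_nonneg (by linarith) (by nlinarith)
  nlinarith [mul_nonneg (mul_nonneg (by linarith : (0:ℝ) ≤ t) (by positivity : (0:ℝ) ≤ (K+1)^2)) h1,
    mul_nonneg (by linarith : (0:ℝ) ≤ 1 - y) h2]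

theorem gamma_a_bounds (a : ℝ) (ha : 1 / 2 ≤ a) (ha1 : a ≤ 1)
    (α : ℕ → ℝ) (hα : ∀ m, α m = 1 / ((m : ℝ) + 1) ^ a)
    (r : ℕ → ℝ)
    (hr : ∀ k, r k = (α k * (1 - α k)) / (α (k + 1) * (1 - α (k + 1)))) :
    BddAbove {x : ℝ | ∃ k, 2 ≤ k ∧ x = r k} ∧
    1 ≤ sSup {x : ℝ | ∃ k, 2 ≤ k ∧ x = r k} ∧
    (a = 1 → (∀ k, 2 ≤ k → r (k + 1) ≤ r k) ∧
      sSup {x : ℝ | ∃ k, 2 ≤ k ∧ x = r k} = 32 / 27) ∧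
    sSup {x : ℝ | ∃ k, 2 ≤ k ∧ x = r k} ≤ 32 / 27 := by
  have ha0 : (0:ℝ) < a := by linarith
  -- basic facts about α
  have hαpos : ∀ m : ℕ, 0 < α m := by
    intro m; rw [hα]
    positivity
  have hαlt1 : ∀ m : ℕ, 1 ≤ m → α m < 1 := by
    intro m hm; rw [hα]
    rw [div_lt_one (by positivity)]
    have hm1 : (1:ℝ) ≤ (m:ℝ) := by exact_mod_cast hm
    exact (Real.one_lt_rpow_iff_of_pos (by positivity)).mpr (Or.inl ⟨by linarith, ha0⟩)
  have hαmono : ∀ m : ℕ, α (m+1) ≤ α m := by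
    intro m
    rw [hα, hα]
    apply one_div_le_one_div_of_le (by positivity)
    apply Real.rpow_le_rpow (by positivity) (by push_cast; linarith) (le_of_lt ha0)
  -- key bound: r k ≤ k(k+2)²/(k+1)³ for k ≥ 2
  have hrkey : ∀ k : ℕ, 2 ≤ k → r k ≤ (k:ℝ)*((k:ℝ)+2)^2/((k:ℝ)+1)^3 := by
    intro k hk
    have hK : (2:ℝ) ≤ (k:ℝ) := by exact_mod_cast hk
    set K : ℝ := (k:ℝ) with hKdef
    set x := α k with hxdef
    set y := α (k+1) with hydef
    have hx0 : 0 < x := hαpos k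
    have hy0 : 0 < y := hαpos (k+1)
    have hx1 : x < 1 := hαlt1 k (by omega)
    have hy1 : y < 1 := hαlt1 (k+1) (by omega)
    have hyx : y ≤ x := hαmono k
    set t := x / y with htdef
    have hxty : x = t * y := by rw [htdef, div_mul_cancel₀ x (ne_of_gt hy0)]
    have ht1 : 1 ≤ t := (one_le_div hy0).mpr hyx
    have hxe : x = 1 / (K+1)^a := by rw [hxdef, hα]
    have hye : y = 1 / (K+2)^a := by rw [hydef, hα]; push_cast; ring_nf; rw [hKdef]
    have hP0 : (0:ℝ) < (K+2)^a := by positivity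
    have hQ0 : (0:ℝ) < (K+1)^a := by positivity
    have ht2 : t * (K+1) ≤ K+2 := by
      have htval : t = ((K+2)/(K+1))^a := by
        rw [htdef, hxe, hye, Real.div_rpow (by linarith : (0:ℝ) ≤ K+2) (by linarith : (0:ℝ) ≤ K+1)]
        field_simp
      have hb1 : (1:ℝ) ≤ (K+2)/(K+1) := by
        rw [le_div_iff₀ (by linarith)]; linarith
      have : ((K+2)/(K+1))^a ≤ ((K+2)/(K+1))^(1:ℝ) :=
        Real.rpow_le_rpow_of_exponent_le hb1 ha1
      rw [Real.rpow_one] at this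
      rw [htval]
      calc ((K+2)/(K+1))^a * (K+1) ≤ ((K+2)/(K+1)) * (K+1) := by
            apply mul_le_mul_of_nonneg_right this (by linarith)
        _ = K+2 := by field_simp
    have hyK : 1 ≤ y * (K+2) := by
      have : (K+2)^a ≤ (K+2)^(1:ℝ) :=
        Real.rpow_le_rpow_of_exponent_le (by linarith) ha1
      rw [Real.rpow_one] at this
      rw [hye]
      rw [div_mul_eq_mul_div, one_mul, le_div_iff₀ hP0, one_mul]
      exact this
    have hpoly := poly_key K t y hK ht1 ht2 hyK (le_of_lt hy1)
    rw [hr]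
    rw [← hxdef, ← hydef]
    rw [div_le_div_iff₀ (by nlinarith) (by positivity)]
    have := mul_le_mul_of_nonneg_left hpoly (le_of_lt hy0)
    calc x * (1-x) * (K+1)^3 = y * (t*(1-t*y)*(K+1)^3) := by rw [hxty]; ring
      _ ≤ y * (K*(K+2)^2*(1-y)) := this
      _ = K*(K+2)^2*(y*(1-y)) := by ring
  -- the k-dependent bound is ≤ 32/27 for k ≥ 2
  have hb32 : ∀ k : ℕ, 2 ≤ k → (k:ℝ)*((k:ℝ)+2)^2/((k:ℝ)+1)^3 ≤ 32/27 := by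
    intro k hk
    have hK : (2:ℝ) ≤ (k:ℝ) := by exact_mod_cast hk
    rw [div_le_div_iff₀ (by positivity) (by norm_num)]
    nlinarith [mul_nonneg (mul_nonneg (by linarith : (0:ℝ) ≤ (k:ℝ)-2) (by linarith : (0:ℝ) ≤ (k:ℝ)-2)) (by linarith : (0:ℝ) ≤ 5*(k:ℝ)+8)]
  have hr32 : ∀ k : ℕ, 2 ≤ k → r k ≤ 32/27 := fun k hk => le_trans (hrkey k hk) (hb32 k hk)
  have hbdd : BddAbove {x : ℝ | ∃ k, 2 ≤ k ∧ x = r k} := by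
    refine ⟨32/27, ?_⟩
    rintro x ⟨k, hk, rfl⟩
    exact hr32 k hk
  have hSle : sSup {x : ℝ | ∃ k, 2 ≤ k ∧ x = r k} ≤ 32/27 := by
    apply Real.sSup_le
    · rintro x ⟨k, hk, rfl⟩; exact hr32 k hk
    · norm_num
  -- 1 ≤ r 4
  have hr4 : 1 ≤ r 4 := by
    set x := α 4 with hxdef
    set y := α 5 with hydef
    have hx0 : 0 < x := hαpos 4
    have hy0 : 0 < y := hαpos 5
    have hyx : y ≤ x := hαmono 4
    have hxhalf : x ≤ 1/2 := by
      rw [hxdef, hα]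
      have key : (2:ℝ) ≤ (5:ℝ) ^ a := by
        have h1 : ((5:ℝ))^((1:ℝ)/2) ≤ (5:ℝ)^a :=
          Real.rpow_le_rpow_of_exponent_le (by norm_num) ha
        have h2 : (2:ℝ) ≤ (5:ℝ)^((1:ℝ)/2) := by
          have hsq : ((5:ℝ)^((1:ℝ)/2))^(2:ℕ) = 5 := by
            rw [← Real.rpow_natCast ((5:ℝ)^((1:ℝ)/2)) 2, ← Real.rpow_mul (by norm_num)]
            norm_num
          nlinarith [Real.rpow_nonneg (by norm_num : (0:ℝ) ≤ 5) ((1:ℝ)/2)]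
        linarith
      have hc : ((4:ℕ):ℝ) + 1 = 5 := by norm_num
      rw [hc, div_le_div_iff₀ (by positivity) (by norm_num)]
      linarith
    rw [hr 4, ← hxdef]
    have : (5:ℕ) = 4 + 1 := rfl
    rw [show (4:ℕ)+1 = 5 from rfl, ← hydef]
    rw [le_div_iff₀ (by nlinarith)]
    nlinarith
  have hS1 : 1 ≤ sSup {x : ℝ | ∃ k, 2 ≤ k ∧ x = r k} := by
    refine le_trans hr4 (le_csSup hbdd ⟨4, by norm_num, rfl⟩)
  refine ⟨hbdd, hS1, ?_, hSle⟩
  -- a = 1 case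
  intro ha1'
  subst ha1'
  have hrval : ∀ k : ℕ, r k = (k:ℝ)*((k:ℝ)+2)^2/((k:ℝ)+1)^3 := by
    intro k
    rw [hr, hα, hα]
    push_cast
    rw [Real.rpow_one, Real.rpow_one]
    have h1 : ((k:ℝ)+1) ≠ 0 := by positivity
    have h2 : ((k:ℝ)+2) ≠ 0 := by positivity
    field_simp
    ring
  constructor
  · intro k hk
    have hK : (2:ℝ) ≤ (k:ℝ) := by exact_mod_cast hk
    rw [hrval, hrval]
    push_cast
    rw [div_le_div_iff₀ (by positivity) (by positivity)]
    nlinarith [mul_nonneg (mul_nonneg (by linarith : (0:ℝ) ≤ (k:ℝ)-2) (by positivity : (0:ℝ) ≤ (k:ℝ)^2)) (by linarith : (0:ℝ) ≤ (k:ℝ)), sq_nonneg ((k:ℝ)-2), sq_nonneg (k:ℝ)]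
  · apply le_antisymm hSle
    have hmem : (32/27 : ℝ) ∈ {x : ℝ | ∃ k, 2 ≤ k ∧ x = r k} := by
      refine ⟨2, le_refl 2, ?_⟩
      rw [hrval]; norm_num
    exact le_csSup hbdd hmem
end
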